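/- arXiv:2003.00325 — 4 statements merged into one kernel-verified Lean document; each statement's English description precedes it below -/
import Mathlib

section
/- Let M be a topological space with a transitive relation ≪ such that I⁺(p) and I⁻(p) := {q : q ≪ p} are open for all p. Then for any S ⊆ M, the topological boundary ∂I⁺(S) is achronal: there do not exist points q, r ∈ ∂I⁺(S) with q ≪ r. -/
/-- The boundary of the chronological future of a set is achronal. -/
theorem frontier_future_achronal {M : Type*} [TopologicalSpace M] (lt : M → M → Prop)
    (htrans : ∀ p q r : M, lt p q → lt q r → lt p r)
    (hopenF : ∀ p : M, IsOpen {q : M | lt p q})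
    (hopenP : ∀ p : M, IsOpen {q : M | lt q p})
    (S : Set M) :
    ¬ ∃ q r : M, q ∈ frontier (⋃ p ∈ S, {x : M | lt p x}) ∧
      r ∈ frontier (⋃ p ∈ S, {x : M | lt p x}) ∧ lt q r := by
  rintro ⟨q, r, hq, hr, hqr⟩
  set I : Set M := ⋃ p ∈ S, {x : M | lt p x} with hI
  have hIopen : IsOpen I := isOpen_biUnion fun p _ => hopenF p
  -- q ∈ closure I, and {x | lt x r} is an open set containing q
  have hqcl : q ∈ closure I := hq.1
  obtain ⟨x, hxr, hxI⟩ := mem_closure_iff.mp hqcl {x : M | lt x r} (hopenP r) hqr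
  obtain ⟨p, hpS, hpx⟩ := Set.mem_iUnion₂.mp hxI
  have hrI : r ∈ I := Set.mem_iUnion₂.mpr ⟨p, hpS, htrans p x r hpx hxr⟩
  exact hr.2 (hIopen.subset_interior_iff.mpr subset_rfl hrI)
end

section
/- With the hypotheses of the previous setting (≪ transitive, I⁺(p) and I⁻(p) open for all p), if q ∈ ∂I⁺(S) then I⁺(q) ⊆ I⁺(S). -/
/-- If `q ∈ ∂I⁺(S)` then `I⁺(q) ⊆ I⁺(S)`. -/
theorem future_subset_of_mem_frontier {M : Type*} [TopologicalSpace M] (lt : M → M → Prop)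
    (htrans : ∀ p q r : M, lt p q → lt q r → lt p r)
    (hopenF : ∀ p : M, IsOpen {q : M | lt p q})
    (hopenP : ∀ p : M, IsOpen {q : M | lt q p})
    (S : Set M) (q : M) (hq : q ∈ frontier (⋃ p ∈ S, {x : M | lt p x})) :
    {x : M | lt q x} ⊆ ⋃ p ∈ S, {x : M | lt p x} := by
  intro x hx
  have hcl : q ∈ closure (⋃ p ∈ S, {x : M | lt p x}) := hq.1
  have hmem : ({y : M | lt y x} ∩ ⋃ p ∈ S, {z : M | lt p z}).Nonempty := by
    have := mem_closure_iff.mp hcl {y : M | lt y x} (hopenP x) hx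
    exact this
  obtain ⟨y, hyx, hyS⟩ := hmem
  simp only [Set.mem_iUnion] at hyS ⊢
  obtain ⟨p, hp, hpy⟩ := hyS
  exact ⟨p, hp, htrans p y x hpy hyx⟩
end

section
/- Let r : D → ℝ^{N+1} be a C³ immersion with Christoffel symbols Γ^l_{jk}, unit normal n, second fundamental form b_{jk}, and Gauss formula ∂²r/∂u_j∂u_k = Γ^l_{jk} ∂r/∂u_l + b_{jk} n, together with Weingarten-type formula ∂n/∂u_j = −b_j^l ∂r/∂u_l + (components in auxiliary normals n̂_q orthogonal to all tangent vectors). Then equality of mixed third partial derivatives ∂³r/∂u_i∂u_j∂u_k = ∂³r/∂u_j∂u_i∂u_k, together with linear independence of the tangent vectors and normals, implies the Gauss equation: R^l_{ijk} := ∂Γ^l_{jk}/∂u_i − ∂Γ^l_{ik}/∂u_j + Γ^p_{jk}Γ^l_{pi} − Γ^p_{ik}Γ^l_{pj} = b_{jk} b_i^l − b_{ik} b_j^l. -/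
open Set

/-- Partial derivative of a (scalar- or vector-valued) map on `ℝ^{m+1}` in the `j`-th
coordinate direction. -/
noncomputable def pdv {m : ℕ} {F : Type*} [NormedAddCommGroup F] [NormedSpace ℝ F]
    (j : Fin (m + 1)) (f : (Fin (m + 1) → ℝ) → F) (u : Fin (m + 1) → ℝ) : F :=
  fderiv ℝ f u (Pi.single j 1)

section aux

variable {m : ℕ} {F : Type*} [NormedAddCommGroup F] [NormedSpace ℝ F]

lemma pdv_congr_nhds {f g : (Fin (m + 1) → ℝ) → F} {u : Fin (m + 1) → ℝ}
    (h : f =ᶠ[nhds u] g) (i : Fin (m + 1)) : pdv i f u = pdv i g u := by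
  simp only [pdv, h.fderiv_eq]

lemma pdv_add {f g : (Fin (m + 1) → ℝ) → F} {u : Fin (m + 1) → ℝ}
    (hf : DifferentiableAt ℝ f u) (hg : DifferentiableAt ℝ g u) (i : Fin (m + 1)) :
    pdv i (fun x => f x + g x) u = pdv i f u + pdv i g u := by
  simp [pdv, fderiv_fun_add hf hg]

lemma pdv_smul {c : (Fin (m + 1) → ℝ) → ℝ} {f : (Fin (m + 1) → ℝ) → F} {u : Fin (m + 1) → ℝ}
    (hc : DifferentiableAt ℝ c u) (hf : DifferentiableAt ℝ f u) (i : Fin (m + 1)) :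
    pdv i (fun x => c x • f x) u = pdv i c u • f u + c u • pdv i f u := by
  simp [pdv, fderiv_fun_smul hc hf, add_comm]

lemma pdv_sum {ι : Type*} (s : Finset ι)
    {f : ι → (Fin (m + 1) → ℝ) → F} {u : Fin (m + 1) → ℝ}
    (hf : ∀ l ∈ s, DifferentiableAt ℝ (f l) u) (i : Fin (m + 1)) :
    pdv i (fun x => ∑ l ∈ s, f l x) u = ∑ l ∈ s, pdv i (f l) u := by
  simp [pdv, fderiv_fun_sum hf]

lemma pdv_contDiffAt {f : (Fin (m + 1) → ℝ) → F} {u : Fin (m + 1) → ℝ}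
    {k n : WithTop ℕ∞} (hf : ContDiffAt ℝ n f u) (hn : k + 1 ≤ n) (l : Fin (m + 1)) :
    ContDiffAt ℝ k (pdv l f) u := by
  have h1 : ContDiffAt ℝ k (fderiv ℝ f) u := hf.fderiv_right hn
  exact h1.clm_apply contDiffAt_const

lemma pdv_comm {f : (Fin (m + 1) → ℝ) → F} {u : Fin (m + 1) → ℝ}
    (hf : ContDiffAt ℝ 2 f u) (i j : Fin (m + 1)) :
    pdv i (pdv j f) u = pdv j (pdv i f) u := by
  have hd : DifferentiableAt ℝ (fderiv ℝ f) u := by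
    have h1 : ContDiffAt ℝ 1 (fderiv ℝ f) u := hf.fderiv_right (by norm_num)
    exact h1.differentiableAt (by norm_num)
  have h1 : ∀ v : Fin (m + 1) → ℝ,
      fderiv ℝ (fun x => fderiv ℝ f x v) u = (fderiv ℝ (fderiv ℝ f) u).flip v := by
    intro v
    have h2 := fderiv_clm_apply (c := fderiv ℝ f) (u := fun _ => v) hd (differentiableAt_const v)
    simpa using h2
  have hsymm : IsSymmSndFDerivAt ℝ f u := hf.isSymmSndFDerivAt (by simp)
  show fderiv ℝ (fun x => fderiv ℝ f x (Pi.single j 1)) u (Pi.single i 1)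
      = fderiv ℝ (fun x => fderiv ℝ f x (Pi.single i 1)) u (Pi.single j 1)
  rw [h1, h1]
  simp only [ContinuousLinearMap.flip_apply]
  exact hsymm _ _

end aux

section expand

variable {m N s' : ℕ} {D : Set (Fin (m + 1) → ℝ)} (hD : IsOpen D)
  {r : (Fin (m + 1) → ℝ) → (Fin (N + 1) → ℝ)} (hr : ContDiffOn ℝ 3 r D)
  {n : (Fin (m + 1) → ℝ) → (Fin (N + 1) → ℝ)} (hn : ContDiffOn ℝ 2 n D)
  {nhat : Fin s' → (Fin (m + 1) → ℝ) → (Fin (N + 1) → ℝ)}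
  {Γ : Fin (m + 1) → Fin (m + 1) → Fin (m + 1) → (Fin (m + 1) → ℝ) → ℝ}
  {bform : Fin (m + 1) → Fin (m + 1) → (Fin (m + 1) → ℝ) → ℝ}
  {bup : Fin (m + 1) → Fin (m + 1) → (Fin (m + 1) → ℝ) → ℝ}
  {e : Fin s' → Fin (m + 1) → (Fin (m + 1) → ℝ) → ℝ}
  (hΓdiff : ∀ l j k, DifferentiableOn ℝ (Γ l j k) D)
  (hbdiff : ∀ j k, DifferentiableOn ℝ (bform j k) D)
  (hgauss : ∀ u ∈ D, ∀ j k : Fin (m + 1),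
    pdv j (pdv k r) u =
      (∑ l : Fin (m + 1), Γ l j k u • pdv l r u) + bform j k u • n u)
  (hwein : ∀ u ∈ D, ∀ j : Fin (m + 1),
    pdv j n u = -(∑ l : Fin (m + 1), bup l j u • pdv l r u) +
      ∑ q : Fin s', e q j u • nhat q u)

include hD hr hn hΓdiff hbdiff hgauss hwein in
/-- Expansion of the third derivative in the moving frame. -/
lemma expand_third : ∀ u ∈ D, ∀ i j k : Fin (m + 1),
    pdv i (pdv j (pdv k r)) u =
      (∑ l : Fin (m + 1),
        (pdv i (Γ l j k) u + (∑ p : Fin (m + 1), Γ p j k u * Γ l i p u)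
          - bform j k u * bup l i u) • pdv l r u)
      + (pdv i (bform j k) u + ∑ p : Fin (m + 1), Γ p j k u * bform i p u) • n u
      + ∑ q : Fin s', (bform j k u * e q i u) • nhat q u := by
  intro u hu i j k
  have hmem : D ∈ nhds u := hD.mem_nhds hu
  have hrC : ContDiffAt ℝ 3 r u := (hr u hu).contDiffAt hmem
  have hdpr : ∀ l, DifferentiableAt ℝ (pdv l r) u := by
    intro l
    have h1 : ContDiffAt ℝ 2 (pdv l r) u := pdv_contDiffAt hrC (by norm_num) l
    exact h1.differentiableAt (by norm_num)
  have hdΓ : ∀ l j' k', DifferentiableAt ℝ (Γ l j' k') u := fun l j' k' =>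
    ((hΓdiff l j' k') u hu).differentiableAt hmem
  have hdb : ∀ j' k', DifferentiableAt ℝ (bform j' k') u := fun j' k' =>
    ((hbdiff j' k') u hu).differentiableAt hmem
  have hdn : DifferentiableAt ℝ n u :=
    ((hn.differentiableOn (by norm_num)) u hu).differentiableAt hmem
  have hEv : pdv j (pdv k r) =ᶠ[nhds u]
      fun x => (∑ l : Fin (m + 1), Γ l j k x • pdv l r x) + bform j k x • n x :=
    Filter.eventuallyEq_of_mem hmem fun x hx => hgauss x hx j k
  have hdsum : DifferentiableAt ℝ
      (fun x => ∑ l : Fin (m + 1), Γ l j k x • pdv l r x) u :=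
    DifferentiableAt.fun_sum fun l _ => (hdΓ l j k).smul (hdpr l)
  have step : pdv i (pdv j (pdv k r)) u =
      (∑ l : Fin (m + 1),
        (pdv i (Γ l j k) u • pdv l r u + Γ l j k u • pdv i (pdv l r) u))
      + (pdv i (bform j k) u • n u + bform j k u • pdv i n u) := by
    rw [pdv_congr_nhds hEv i, pdv_add hdsum ((hdb j k).fun_smul hdn) i,
      pdv_sum Finset.univ (fun l _ => (hdΓ l j k).fun_smul (hdpr l)) i,
      pdv_smul (hdb j k) hdn i]
    congr 1
    exact Finset.sum_congr rfl fun l _ => pdv_smul (hdΓ l j k) (hdpr l) i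
  rw [step, hwein u hu i]
  have step2 : ∀ l : Fin (m + 1), pdv i (pdv l r) u =
      (∑ p : Fin (m + 1), Γ p i l u • pdv p r u) + bform i l u • n u :=
    fun l => hgauss u hu i l
  simp only [step2]
  simp only [smul_add, smul_neg, Finset.smul_sum, smul_smul, add_smul, sub_smul,
    Finset.sum_add_distrib, Finset.sum_sub_distrib, Finset.sum_smul]
  conv_lhs => rw [Finset.sum_comm]
  abel

include hD hr hgauss in
/-- Symmetry of the Christoffel symbols in the lower indices. -/
lemma gamma_symm
    (hindep : ∀ u ∈ D, ∀ (a : Fin (m + 1) → ℝ) (β : ℝ) (γc : Fin s' → ℝ),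
      (∑ l : Fin (m + 1), a l • pdv l r u) + β • n u +
        (∑ q : Fin s', γc q • nhat q u) = 0 → a = 0 ∧ β = 0 ∧ γc = 0) :
    ∀ u ∈ D, ∀ l j k : Fin (m + 1), Γ l j k u = Γ l k j u := by
  intro u hu l j k
  have hmem : D ∈ nhds u := hD.mem_nhds hu
  have hrC : ContDiffAt ℝ 2 r u := ((hr u hu).contDiffAt hmem).of_le (by norm_num)
  have hsym : pdv j (pdv k r) u = pdv k (pdv j r) u := pdv_comm hrC j k
  have h0 : (∑ l' : Fin (m + 1), (Γ l' j k u - Γ l' k j u) • pdv l' r u)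
      + (bform j k u - bform k j u) • n u + (∑ q : Fin s', (0 : ℝ) • nhat q u) = 0 := by
    have key : ((∑ l' : Fin (m + 1), Γ l' j k u • pdv l' r u) + bform j k u • n u)
        - ((∑ l' : Fin (m + 1), Γ l' k j u • pdv l' r u) + bform k j u • n u) = 0 := by
      rw [← hgauss u hu j k, ← hgauss u hu k j, hsym, sub_self]
    calc (∑ l' : Fin (m + 1), (Γ l' j k u - Γ l' k j u) • pdv l' r u)
        + (bform j k u - bform k j u) • n u + (∑ q : Fin s', (0 : ℝ) • nhat q u)
        = ((∑ l' : Fin (m + 1), Γ l' j k u • pdv l' r u) + bform j k u • n u)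
          - ((∑ l' : Fin (m + 1), Γ l' k j u • pdv l' r u) + bform k j u • n u) := by
          simp only [sub_smul, Finset.sum_sub_distrib, zero_smul,
            Finset.sum_const_zero, add_zero]
          abel
      _ = 0 := key
  obtain ⟨ha, -, -⟩ := hindep u hu _ _ _ h0
  have h1 := congrFun ha l
  simpa [sub_eq_zero] using h1

end expand

/-- The Gauss equation: equality of mixed third partial derivatives, the Gauss formula and
the Weingarten-type formula imply
`R^l_{ijk} = b_{jk} b_i^l − b_{ik} b_j^l`. -/
theorem gauss_equation {m N s' : ℕ} (D : Set (Fin (m + 1) → ℝ)) (hD : IsOpen D)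
    (r : (Fin (m + 1) → ℝ) → (Fin (N + 1) → ℝ)) (hr : ContDiffOn ℝ 3 r D)
    (n : (Fin (m + 1) → ℝ) → (Fin (N + 1) → ℝ)) (hn : ContDiffOn ℝ 2 n D)
    (nhat : Fin s' → (Fin (m + 1) → ℝ) → (Fin (N + 1) → ℝ))
    (Γ : Fin (m + 1) → Fin (m + 1) → Fin (m + 1) → (Fin (m + 1) → ℝ) → ℝ)
    (bform : Fin (m + 1) → Fin (m + 1) → (Fin (m + 1) → ℝ) → ℝ)
    (bup : Fin (m + 1) → Fin (m + 1) → (Fin (m + 1) → ℝ) → ℝ)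
    (e : Fin s' → Fin (m + 1) → (Fin (m + 1) → ℝ) → ℝ)
    (ginv : Fin (m + 1) → Fin (m + 1) → (Fin (m + 1) → ℝ) → ℝ)
    (hΓdiff : ∀ l j k, DifferentiableOn ℝ (Γ l j k) D)
    (hbdiff : ∀ j k, DifferentiableOn ℝ (bform j k) D)
    (hbup : ∀ u ∈ D, ∀ l j : Fin (m + 1),
      bup l j u = ∑ k : Fin (m + 1), bform j k u * ginv k l u)
    -- Gauss formula
    (hgauss : ∀ u ∈ D, ∀ j k : Fin (m + 1),
      pdv j (pdv k r) u =
        (∑ l : Fin (m + 1), Γ l j k u • pdv l r u) + bform j k u • n u)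
    -- Weingarten-type formula
    (hwein : ∀ u ∈ D, ∀ j : Fin (m + 1),
      pdv j n u = -(∑ l : Fin (m + 1), bup l j u • pdv l r u) +
        ∑ q : Fin s', e q j u • nhat q u)
    -- pointwise linear independence of tangents, normal and auxiliary normals
    (hindep : ∀ u ∈ D, ∀ (a : Fin (m + 1) → ℝ) (β : ℝ) (γc : Fin s' → ℝ),
      (∑ l : Fin (m + 1), a l • pdv l r u) + β • n u +
        (∑ q : Fin s', γc q • nhat q u) = 0 → a = 0 ∧ β = 0 ∧ γc = 0) :
    ∀ u ∈ D, ∀ i j k l : Fin (m + 1),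
      pdv i (Γ l j k) u - pdv j (Γ l i k) u +
        (∑ p : Fin (m + 1), Γ p j k u * Γ l p i u) -
        (∑ p : Fin (m + 1), Γ p i k u * Γ l p j u) =
      bform j k u * bup l i u - bform i k u * bup l j u := by
  intro u hu i j k l
  have hmem : D ∈ nhds u := hD.mem_nhds hu
  have hrC : ContDiffAt ℝ 3 r u := (hr u hu).contDiffAt hmem
  have h1 := expand_third hD hr hn hΓdiff hbdiff hgauss hwein u hu i j k
  have h2 := expand_third hD hr hn hΓdiff hbdiff hgauss hwein u hu j i k
  have hsym : pdv i (pdv j (pdv k r)) u = pdv j (pdv i (pdv k r)) u :=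
    pdv_comm (pdv_contDiffAt hrC (by norm_num) k) i j
  set C1 : Fin (m + 1) → ℝ := fun l' =>
    pdv i (Γ l' j k) u + (∑ p : Fin (m + 1), Γ p j k u * Γ l' i p u)
      - bform j k u * bup l' i u with hC1
  set C2 : Fin (m + 1) → ℝ := fun l' =>
    pdv j (Γ l' i k) u + (∑ p : Fin (m + 1), Γ p i k u * Γ l' j p u)
      - bform i k u * bup l' j u with hC2
  have h0 : (∑ l' : Fin (m + 1), (C1 l' - C2 l') • pdv l' r u)
      + ((pdv i (bform j k) u + ∑ p : Fin (m + 1), Γ p j k u * bform i p u)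
        - (pdv j (bform i k) u + ∑ p : Fin (m + 1), Γ p i k u * bform j p u)) • n u
      + (∑ q : Fin s', (bform j k u * e q i u - bform i k u * e q j u) • nhat q u) = 0 := by
    calc (∑ l' : Fin (m + 1), (C1 l' - C2 l') • pdv l' r u)
        + ((pdv i (bform j k) u + ∑ p : Fin (m + 1), Γ p j k u * bform i p u)
          - (pdv j (bform i k) u + ∑ p : Fin (m + 1), Γ p i k u * bform j p u)) • n u
        + (∑ q : Fin s', (bform j k u * e q i u - bform i k u * e q j u) • nhat q u)
        = ((∑ l' : Fin (m + 1), C1 l' • pdv l' r u)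
            + (pdv i (bform j k) u + ∑ p : Fin (m + 1), Γ p j k u * bform i p u) • n u
            + ∑ q : Fin s', (bform j k u * e q i u) • nhat q u)
          - ((∑ l' : Fin (m + 1), C2 l' • pdv l' r u)
            + (pdv j (bform i k) u + ∑ p : Fin (m + 1), Γ p i k u * bform j p u) • n u
            + ∑ q : Fin s', (bform i k u * e q j u) • nhat q u) := by
          simp only [sub_smul, Finset.sum_sub_distrib]
          abel
      _ = 0 := by rw [← h1, ← h2, hsym, sub_self]
  obtain ⟨ha, -, -⟩ := hindep u hu _ _ _ h0
  have hal : C1 l - C2 l = 0 := congrFun ha l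
  have hg := gamma_symm hD hr hgauss hindep
  have hs1 : (∑ p : Fin (m + 1), Γ p j k u * Γ l p i u)
      = ∑ p : Fin (m + 1), Γ p j k u * Γ l i p u :=
    Finset.sum_congr rfl fun p _ => by rw [hg u hu l p i]
  have hs2 : (∑ p : Fin (m + 1), Γ p i k u * Γ l p j u)
      = ∑ p : Fin (m + 1), Γ p i k u * Γ l j p u :=
    Finset.sum_congr rfl fun p _ => by rw [hg u hu l p j]
  rw [hs1, hs2]
  simp only [hC1, hC2] at hal
  linarith [hal]
end

section
/- Let M be a topological space with transitive relation ≪ and open futures I⁺(p), and suppose M is strongly causal: for each p and each neighborhood U of p there is a neighborhood V ⊆ U of p such that no causal curve meets V in a disconnected set of parameters (i.e., once a causal curve leaves V it never returns). Let K ⊆ M be compact (and first-countable/metrizable) and λ : ℝ → K a causal curve contained in K. Then there exists p ∈ K and a sequence s_j → +∞ with λ(s_j) → p, and p is a future endpoint of λ: for every neighborhood U of p there is s₀ with λ(s) ∈ U for all s > s₀. -/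
open Filter Set

/-- In a strongly causal space-time, a causal curve contained in a compact (first-countable)
set has a future endpoint, obtained as a limit of `λ(s_j)` with `s_j → ∞`. -/
theorem causal_curve_in_compact_has_endpoint {M : Type*} [TopologicalSpace M]
    [FirstCountableTopology M]
    (lt le : M → M → Prop)
    (hlt_trans : ∀ p q r, lt p q → lt q r → lt p r)
    (hle_trans : ∀ p q r, le p q → le q r → le p r)
    (hopen : ∀ p : M, IsOpen {q | lt p q})
    (hstrong : ∀ p : M, ∀ U ∈ nhds p, ∃ V ∈ nhds p, V ⊆ U ∧
      ∀ γ : ℝ → M, (∀ s t : ℝ, s ≤ t → le (γ s) (γ t)) → (γ ⁻¹' V).OrdConnected)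
    (K : Set M) (hK : IsCompact K) (lam : ℝ → M)
    (hcausal : ∀ s t : ℝ, s ≤ t → le (lam s) (lam t))
    (himg : ∀ s : ℝ, lam s ∈ K) :
    ∃ p ∈ K,
      (∃ s : ℕ → ℝ, StrictMono s ∧ Tendsto s atTop atTop ∧
        Tendsto (fun j => lam (s j)) atTop (nhds p)) ∧
      ∀ U : Set M, IsOpen U → p ∈ U → ∃ s₀ : ℝ, ∀ s > s₀, lam s ∈ U := by
  -- cluster point of the curve as s → ∞
  obtain ⟨p, hpK, hcp⟩ := hK.exists_clusterPt (f := Filter.map lam atTop)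
    (Filter.le_principal_iff.mpr (Filter.mem_map.mpr (Filter.univ_mem' himg)))
  -- endpoint property
  have hend : ∀ U : Set M, IsOpen U → p ∈ U → ∃ s₀ : ℝ, ∀ s > s₀, lam s ∈ U := by
    intro U hU hpU
    obtain ⟨V, hVnhds, hVU, hVord⟩ := hstrong p U (hU.mem_nhds hpU)
    have hfreq : ∃ᶠ t in atTop, lam t ∈ V := by
      have := ((nhds p).basis_sets.clusterPt_iff_frequently.mp hcp) V hVnhds
      simpa [Filter.frequently_map] using this
    obtain ⟨s₀, _, hs₀⟩ := (Filter.frequently_atTop.mp hfreq) 0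
    refine ⟨s₀, fun s hs => ?_⟩
    obtain ⟨t, ht, htV⟩ := (Filter.frequently_atTop.mp hfreq) s
    have hmem : s ∈ lam ⁻¹' V :=
      (hVord lam hcausal).out (by exact hs₀) (by exact htV) ⟨hs.le, ht⟩
    exact hVU hmem
  -- convergence along the whole curve
  have htend : Tendsto lam atTop (nhds p) := by
    rw [(nhds_basis_opens p).tendsto_right_iff]
    rintro U ⟨hpU, hU⟩
    obtain ⟨s₀, h⟩ := hend U hU hpU
    exact Filter.eventually_atTop.mpr ⟨s₀ + 1, fun s hs => h s (by linarith)⟩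
  refine ⟨p, hpK, ⟨fun j => (j : ℝ), ?_, tendsto_natCast_atTop_atTop, ?_⟩, hend⟩
  · intro a b h; simpa using (Nat.cast_lt (α := ℝ)).mpr h
  · exact htend.comp tendsto_natCast_atTop_atTop
end
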